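/- Let a, b, c, d be nonnegative reals with ad ≤ bc, and let f, g be real-rooted polynomials with nonnegative coefficients such that g interlaces f. Then a·g + b·f interlaces x·(c·g + d·f), provided both are nonzero. -/

import Mathlib

open Polynomial Finset

/-- A real polynomial has only real roots: the number of real roots
(with multiplicity) equals its degree. (The zero polynomial counts.) -/
def RealRooted (p : Polynomial ℝ) : Prop :=
  p.roots.card = p.natDegree

/-- The list of real roots of `p`, sorted in increasing order. -/
noncomputable def rootList (p : Polynomial ℝ) : List ℝ :=
  p.roots.sort (· ≤ ·)

/-- `Interlaces g f` means `g ≼ f`: both are real-rooted with positive leading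
coefficients, `deg f ∈ {deg g, deg g + 1}`, and the roots alternate
(`v_n ≤ u_n ≤ v_{n-1} ≤ ⋯ ≤ v_1 ≤ u_1`, resp. `u_n ≤ v_{n-1} ≤ ⋯ ≤ v_1 ≤ u_1`,
indexed in decreasing order). The zero polynomial interlaces and is
interlaced by everything, by convention. -/
def Interlaces (g f : Polynomial ℝ) : Prop :=
  g = 0 ∨ f = 0 ∨
    (RealRooted f ∧ RealRooted g ∧ 0 < f.leadingCoeff ∧ 0 < g.leadingCoeff ∧
      ((f.natDegree = g.natDegree ∧
          (∀ i < f.natDegree, (rootList g).getD i 0 ≤ (rootList f).getD i 0) ∧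
          (∀ i, i + 1 < f.natDegree →
            (rootList f).getD i 0 ≤ (rootList g).getD (i + 1) 0)) ∨
       (f.natDegree = g.natDegree + 1 ∧
          (∀ i < g.natDegree, (rootList f).getD i 0 ≤ (rootList g).getD i 0) ∧
          (∀ i, i + 1 < f.natDegree →
            (rootList g).getD i 0 ≤ (rootList f).getD (i + 1) 0))))

/-- All coefficients of `p` are nonnegative. -/
def NonnegCoeffs (p : Polynomial ℝ) : Prop :=
  ∀ k, 0 ≤ p.coeff k


open Classical in
/-- number of entries of `L` that are `< t` -/
noncomputable def cnt (L : List ℝ) (t : ℝ) : ℕ := L.countP (fun x => decide (x < t))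

/-- monic polynomial with roots given by the list `L` -/
noncomputable def poly (L : List ℝ) : Polynomial ℝ :=
  (Multiset.map (fun a => X - C a) (↑L : Multiset ℝ)).prod

/-- the combination, written with C-multiplications -/
noncomputable def comb (bv bu : ℝ) (v u : List ℝ) : Polynomial ℝ :=
  C bv * poly v + C bu * poly u


open Classical in
/-- number of entries of `L` that are `< t` -/
lemma cnt_le_length (L : List ℝ) (t : ℝ) : cnt L t ≤ L.length :=
  List.countP_le_length

lemma cnt_perm {L L' : List ℝ} (h : L.Perm L') (t : ℝ) : cnt L t = cnt L' t :=
  h.countP_eq _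

lemma cnt_cons (x : ℝ) (L : List ℝ) (t : ℝ) :
    cnt (x :: L) t = cnt L t + (if x < t then 1 else 0) := by
  simp [cnt, List.countP_cons]

lemma cnt_append (L L' : List ℝ) (t : ℝ) :
    cnt (L ++ L') t = cnt L t + cnt L' t :=
  List.countP_append

lemma cnt_zero_of_le {x : ℝ} {L : List ℝ} {t : ℝ} (hb : ∀ y ∈ L, x ≤ y) (hx : ¬ x < t) :
    cnt L t = 0 := by
  rw [cnt, List.countP_eq_zero]
  intro y hy
  simp only [decide_eq_true_eq]
  exact fun hyt => hx (lt_of_le_of_lt (hb y hy) hyt)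

/-- for sorted `L`, `L[i] < t` iff `i < cnt L t`. -/
lemma S_iff : ∀ (L : List ℝ), L.Pairwise (· ≤ ·) → ∀ i t, i < L.length →
    (L.getD i 0 < t ↔ i < cnt L t) := by
  intro L
  induction L with
  | nil => intro _ i t hi; simp at hi
  | cons x L ih =>
    intro hs i t hi
    rw [List.pairwise_cons] at hs
    rw [cnt_cons]
    rcases i with _ | i
    · simp only [List.getD_cons_zero]
      constructor
      · intro hx; simp [hx]
      · intro h
        by_contra hx
        simp [cnt_zero_of_le hs.1 hx, hx] at h
    · simp only [List.getD_cons_succ]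
      simp only [List.length_cons, Nat.succ_lt_succ_iff] at hi
      rw [ih hs.2 i t hi]
      by_cases hx : x < t
      · simp [hx]
      · have h0 := cnt_zero_of_le hs.1 hx
        simp [h0, hx]

/-- all entries below t: cnt = length -/
lemma cnt_eq_length {L : List ℝ} {t : ℝ} (h : ∀ y ∈ L, y < t) : cnt L t = L.length := by
  rw [cnt, List.countP_eq_length]
  intro y hy; simpa using h y hy


lemma sorted_getD_le {L : List ℝ} (hs : L.Pairwise (· ≤ ·)) {i j : ℕ} (hij : i ≤ j)
    (hj : j < L.length) : L.getD i 0 ≤ L.getD j 0 := by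
  rw [List.getD_eq_getElem L 0 (lt_of_le_of_lt hij hj), List.getD_eq_getElem L 0 hj]
  rcases eq_or_lt_of_le hij with rfl | hlt
  · exact le_refl _
  · exact List.Pairwise.rel_get_of_lt hs (by simpa using hlt)

/-- count-to-pointwise, direction 1 -/
lemma M1a {A B : List ℝ} (hA : A.Pairwise (· ≤ ·)) (hB : B.Pairwise (· ≤ ·)) (k : ℕ)
    (hlen : B.length ≤ A.length + k)
    (h : ∀ i, i + k < B.length → A.getD i 0 ≤ B.getD (i + k) 0) :
    ∀ t, cnt B t ≤ cnt A t + k := by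
  intro t
  by_contra hcon
  push_neg at hcon
  set i := cnt A t with hi
  have h1 : i + k < cnt B t := hcon
  have h2 : i + k < B.length := lt_of_lt_of_le h1 (cnt_le_length _ _)
  have h3 : B.getD (i + k) 0 < t := by
    rw [S_iff B hB _ t h2]; exact h1
  have h4 : i < A.length := by omega
  have h5 : ¬ (A.getD i 0 < t) := by
    rw [S_iff A hA _ t h4]; omega
  exact h5 (lt_of_le_of_lt (h i h2) h3)

/-- count-to-pointwise, direction 2 -/
lemma M1b {A B : List ℝ} (hA : A.Pairwise (· ≤ ·)) (hB : B.Pairwise (· ≤ ·)) (k : ℕ)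
    (h : ∀ t, cnt B t ≤ cnt A t + k) :
    ∀ i, i + k < B.length → i < A.length → A.getD i 0 ≤ B.getD (i + k) 0 := by
  intro i hik hiA
  by_contra hcon
  push_neg at hcon
  have h1 : i + k < cnt B (A.getD i 0) := by
    rw [← S_iff B hB _ _ hik]; exact hcon
  have h2 : cnt A (A.getD i 0) ≤ i := by
    by_contra hc
    push_neg at hc
    have := (S_iff A hA i _ hiA).mpr hc
    exact lt_irrefl _ this
  have := h (A.getD i 0)
  omega


/-- monic polynomial with roots given by the list `L` -/
lemma poly_perm {L L' : List ℝ} (h : L.Perm L') : poly L = poly L' := by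
  unfold poly
  congr 1
  rw [Multiset.coe_eq_coe.mpr h]

lemma poly_monic (L : List ℝ) : (poly L).Monic := by
  apply Polynomial.monic_multiset_prod_of_monic
  intro i _
  exact monic_X_sub_C i

lemma poly_ne_zero (L : List ℝ) : poly L ≠ 0 := (poly_monic L).ne_zero

lemma poly_natDegree (L : List ℝ) : (poly L).natDegree = L.length := by
  unfold poly
  rw [Polynomial.natDegree_multiset_prod]
  · rw [Multiset.map_map]
    have : Multiset.map (Polynomial.natDegree ∘ fun a => X - C a) (↑L : Multiset ℝ)
        = Multiset.map (fun _ => 1) (↑L : Multiset ℝ) := by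
      apply Multiset.map_congr rfl
      intro x _
      simp [natDegree_X_sub_C]
    rw [this, Multiset.map_const', Multiset.sum_replicate]
    simp
  · intro h
    rw [Multiset.mem_map] at h
    obtain ⟨a, _, ha⟩ := h
    exact X_sub_C_ne_zero a ha

lemma poly_roots (L : List ℝ) : (poly L).roots = (↑L : Multiset ℝ) :=
  Polynomial.roots_multiset_prod_X_sub_C _

lemma poly_cons (r : ℝ) (L : List ℝ) : poly (r :: L) = (X - C r) * poly L := by
  unfold poly
  have : (↑(r :: L) : Multiset ℝ) = r ::ₘ (↑L : Multiset ℝ) := rfl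
  rw [this, Multiset.map_cons, Multiset.prod_cons]

lemma poly_eval (L : List ℝ) (t : ℝ) :
    (poly L).eval t = (L.map (fun x => t - x)).prod := by
  unfold poly
  rw [Polynomial.eval_multiset_prod, Multiset.map_map]
  simp only [Function.comp, eval_sub, eval_X, eval_C]
  rfl


lemma poly_eval_mem {r : ℝ} {L : List ℝ} (h : r ∈ L) : (poly L).eval r = 0 := by
  rw [poly_perm (List.perm_cons_erase h), poly_cons]
  simp

lemma poly_erase {r : ℝ} {L : List ℝ} (h : r ∈ L) :
    poly L = (X - C r) * poly (L.erase r) := by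
  rw [poly_perm (List.perm_cons_erase h), poly_cons]

lemma poly_append_zero (L : List ℝ) : poly (L ++ [0]) = X * poly L := by
  have hp : (L ++ [0]).Perm ((0:ℝ) :: L) := by
    refine List.Perm.trans (List.perm_append_comm) ?_
    simp
  rw [poly_perm hp, poly_cons]
  simp

/-- sign of the evaluation of poly L at a non-root -/
lemma sgn_eval : ∀ (L : List ℝ) (t : ℝ), t ∉ L →
    0 < (-1 : ℝ) ^ (L.countP (fun x => decide (t < x))) * (poly L).eval t := by
  intro L
  induction L with
  | nil =>
    intro t _
    simp [poly]
  | cons x L ih =>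
    intro t ht
    have hx : t ≠ x := fun h => ht (h ▸ (List.mem_cons_self (a := x) (l := L)))
    have htL : t ∉ L := fun h => ht (List.mem_cons_of_mem x h)
    have hih := ih t htL
    rw [poly_cons, List.countP_cons]
    simp only [eval_mul, eval_sub, eval_X, eval_C]
    by_cases hlt : t < x
    · rw [if_pos (by simpa using hlt), pow_succ]
      have hneg : t - x < 0 := by linarith
      nlinarith
    · have hgt : x < t := lt_of_le_of_ne (not_lt.mp hlt) (Ne.symm hx)
      rw [if_neg (by simpa using hlt), Nat.add_zero]
      have hpos : 0 < t - x := by linarith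
      nlinarith

/-- exponent transfer: for t not in L -/
lemma countP_gt_eq {L : List ℝ} {t : ℝ} (h : t ∉ L) :
    L.countP (fun x => decide (t < x)) = L.length - cnt L t := by
  have := List.length_eq_countP_add_countP (fun x : ℝ => decide (x < t)) (l := L)
  have he : L.countP (fun x => decide (t < x))
      = L.countP (fun x => decide ¬(decide (x < t) = true)) := by
    apply List.countP_congr
    intro x hx
    have hxt : x ≠ t := fun hh => h (hh ▸ hx)
    simp only [decide_eq_true_eq, decide_not]
    constructor
    · intro hh
      simp only [Bool.not_eq_true', decide_eq_false_iff_not]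
      exact fun hcon => absurd hh (not_lt.mpr (le_of_lt hcon))
    · intro hh
      simp only [Bool.not_eq_true', decide_eq_false_iff_not] at hh
      exact lt_of_le_of_ne (not_lt.mp hh) hxt.symm
  rw [he]
  unfold cnt
  omega

lemma sgn_eval' {L : List ℝ} {t : ℝ} (h : t ∉ L) :
    0 < (-1 : ℝ) ^ (L.length - cnt L t) * (poly L).eval t := by
  rw [← countP_gt_eq h]
  exact sgn_eval L t h


lemma rootList_sorted (p : Polynomial ℝ) : (rootList p).Pairwise (· ≤ ·) :=
  Multiset.pairwise_sort _ _

lemma rootList_coe (p : Polynomial ℝ) : (↑(rootList p) : Multiset ℝ) = p.roots :=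
  Multiset.sort_eq _ _

lemma rootList_length {p : Polynomial ℝ} (h : RealRooted p) :
    (rootList p).length = p.natDegree := by
  rw [rootList, Multiset.length_sort]
  exact h

/-- rootList of C c * poly L for L sorted -/
lemma CpolyL_roots (c : ℝ) (hc : c ≠ 0) (L : List ℝ) :
    (C c * poly L).roots = (↑L : Multiset ℝ) := by
  rw [Polynomial.roots_C_mul _ hc, poly_roots]

lemma CpolyL_natDegree (c : ℝ) (hc : c ≠ 0) (L : List ℝ) :
    (C c * poly L).natDegree = L.length := by
  rw [Polynomial.natDegree_C_mul hc, poly_natDegree]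

lemma CpolyL_leadingCoeff (c : ℝ) (L : List ℝ) :
    (C c * poly L).leadingCoeff = c := by
  rw [Polynomial.leadingCoeff_mul, Polynomial.leadingCoeff_C, (poly_monic L).leadingCoeff, mul_one]

lemma CpolyL_realRooted (c : ℝ) (hc : c ≠ 0) (L : List ℝ) :
    RealRooted (C c * poly L) := by
  rw [RealRooted, CpolyL_roots c hc, CpolyL_natDegree c hc]
  simp

lemma CpolyL_ne_zero (c : ℝ) (hc : c ≠ 0) (L : List ℝ) : C c * poly L ≠ 0 :=
  mul_ne_zero (by simpa using hc) (poly_monic L).ne_zero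

lemma CpolyL_rootList (c : ℝ) (hc : c ≠ 0) {L : List ℝ} (hL : L.Pairwise (· ≤ ·)) :
    rootList (C c * poly L) = L := by
  apply List.Perm.eq_of_pairwise' (rootList_sorted _) hL
  rw [← Multiset.coe_eq_coe, rootList_coe, CpolyL_roots c hc]

/-- decomposition of a real-rooted polynomial -/
lemma decomp {p : Polynomial ℝ} (hp : p ≠ 0) (hrr : RealRooted p) :
    p = C p.leadingCoeff * poly (rootList p) := by
  have hm := Polynomial.monic_mul_leadingCoeff_inv hp
  have hroots : (p * C p.leadingCoeff⁻¹).roots = p.roots := by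
    rw [mul_comm, Polynomial.roots_C_mul]
    simpa using Polynomial.leadingCoeff_ne_zero.mpr hp
  have hdeg : (p * C p.leadingCoeff⁻¹).natDegree = p.natDegree := by
    rw [mul_comm, Polynomial.natDegree_C_mul]
    simpa using Polynomial.leadingCoeff_ne_zero.mpr hp
  have hcard : (p * C p.leadingCoeff⁻¹).roots.card = (p * C p.leadingCoeff⁻¹).natDegree := by
    rw [hroots, hdeg]; exact hrr
  have key := Polynomial.prod_multiset_X_sub_C_of_monic_of_roots_card_eq hm hcard
  have hpoly : poly (rootList p) = p * C p.leadingCoeff⁻¹ := by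
    rw [← key, hroots]
    unfold poly
    rw [rootList_coe]
  rw [hpoly]
  have hlc : p.leadingCoeff ≠ 0 := Polynomial.leadingCoeff_ne_zero.mpr hp
  rw [← mul_assoc, mul_comm (C p.leadingCoeff), mul_assoc, ← C_mul,
    mul_inv_cancel₀ hlc]
  simp

/-- nonneg coefficients implies roots nonpositive -/
lemma roots_nonpos {p : Polynomial ℝ} (hp : p ≠ 0) (hnn : NonnegCoeffs p) :
    ∀ r ∈ p.roots, r ≤ 0 := by
  intro r hr
  by_contra hcon
  push_neg at hcon
  have hroot : p.eval r = 0 := (Polynomial.isRoot_of_mem_roots hr)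
  have hlc : 0 < p.coeff p.natDegree := by
    have := hnn p.natDegree
    rcases eq_or_lt_of_le this with h | h
    · exfalso
      exact (Polynomial.leadingCoeff_ne_zero.mpr hp) (by rw [Polynomial.leadingCoeff]; exact h.symm ▸ rfl)
    · exact h
  have : 0 < p.eval r := by
    rw [Polynomial.eval_eq_sum_range]
    have hmem : p.natDegree ∈ Finset.range (p.natDegree + 1) := by simp
    calc 0 < p.coeff p.natDegree * r ^ p.natDegree := by
            apply mul_pos hlc (pow_pos hcon _)
    _ ≤ _ := Finset.single_le_sum (fun i _ => mul_nonneg (hnn i) (le_of_lt (pow_pos hcon i))) hmem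
  rw [hroot] at this
  exact lt_irrefl _ this


/-- IVT-based root construction -/
lemma ROOTS (p : Polynomial ℝ) (n : ℕ) (lo hi : ℕ → ℝ)
    (hlohi : ∀ i < n, lo i < hi i)
    (hlo : ∀ i < n, 0 < (-1 : ℝ) ^ (n - i) * p.eval (lo i))
    (hhi : ∀ i < n, 0 ≤ (-1 : ℝ) ^ (n - i - 1) * p.eval (hi i)) :
    ∃ w : ℕ → ℝ, ∀ i < n, lo i < w i ∧ w i ≤ hi i ∧ p.eval (w i) = 0 := by
  have key : ∀ i < n, ∃ x, lo i < x ∧ x ≤ hi i ∧ p.eval x = 0 := by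
    intro i hi_n
    by_cases hz : p.eval (hi i) = 0
    · exact ⟨hi i, hlohi i hi_n, le_refl _, hz⟩
    · have h1 := hlo i hi_n
      have h2 := hhi i hi_n
      rcases Nat.even_or_odd (n - i) with he | ho
      · -- p(lo) > 0, p(hi) < 0
        have hplo : 0 < p.eval (lo i) := by
          rw [he.neg_one_pow, one_mul] at h1; exact h1
        have hphi : p.eval (hi i) < 0 := by
          have : (-1 : ℝ) ^ (n - i - 1) = -1 := by
            have : Odd (n - i - 1) := by
              rcases he with ⟨k, hk⟩
              have : n - i - 1 = 2 * (k - 1) + 1 := by omega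
              exact ⟨k - 1, by omega⟩
            exact this.neg_one_pow
          rw [this] at h2
          rcases lt_or_eq_of_le h2 with h | h
          · linarith
          · exact absurd (by linarith) hz
        have := intermediate_value_Ioc' (le_of_lt (hlohi i hi_n))
          (Polynomial.continuous p).continuousOn
          (show (0:ℝ) ∈ Set.Ico (p.eval (hi i)) (p.eval (lo i)) from ⟨le_of_lt hphi, hplo⟩)
        obtain ⟨x, hx, hpx⟩ := this
        exact ⟨x, hx.1, hx.2, hpx⟩
      · have hplo : p.eval (lo i) < 0 := by
          rw [ho.neg_one_pow] at h1; linarith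
        have hphi : 0 < p.eval (hi i) := by
          have hev : Even (n - i - 1) := by
            rcases ho with ⟨k, hk⟩
            exact ⟨k, by omega⟩
          rw [hev.neg_one_pow, one_mul] at h2
          exact lt_of_le_of_ne h2 (Ne.symm hz)
        have := intermediate_value_Ioc (le_of_lt (hlohi i hi_n))
          (Polynomial.continuous p).continuousOn
          (show (0:ℝ) ∈ Set.Ioc (p.eval (lo i)) (p.eval (hi i)) from ⟨hplo, le_of_lt hphi⟩)
        obtain ⟨x, hx, hpx⟩ := this
        exact ⟨x, hx.1, hx.2, hpx⟩
  choose w hw using fun i => fun h : i < n => key i h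
  classical
  refine ⟨fun i => if h : i < n then w i h else 0, ?_⟩
  intro i hi_n
  simp only [dif_pos hi_n]
  exact hw i hi_n

/-- conclude the factorization from n distinct roots -/
lemma CONCLUDE (p : Polynomial ℝ) (n : ℕ) (w : ℕ → ℝ)
    (hdeg : p.natDegree = n) (hlc : 0 < p.leadingCoeff)
    (hmono : ∀ i j, i < j → j < n → w i < w j)
    (hroots : ∀ i < n, p.eval (w i) = 0) :
    RealRooted p ∧ rootList p = List.ofFn (fun i : Fin n => w i) ∧
      p = C p.leadingCoeff * poly (List.ofFn (fun i : Fin n => w i)) := by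
  have hp : p ≠ 0 := fun h => by simp [h] at hlc
  set W : List ℝ := List.ofFn (fun i : Fin n => w i) with hW
  have hlen : W.length = n := by simp [hW]
  have hnodup : W.Nodup := by
    rw [hW, List.nodup_ofFn]
    intro i j hij
    rcases lt_trichotomy i j with h | h | h
    · exact absurd hij (ne_of_lt (hmono i j h j.isLt))
    · exact Fin.ext (by exact_mod_cast congrArg Fin.val h)
    · exact absurd hij.symm (ne_of_lt (hmono j i h i.isLt))
  have hle : (↑W : Multiset ℝ) ≤ p.roots := by
    rw [Multiset.le_iff_count]
    intro r
    by_cases hr : r ∈ W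
    · have hc1 : Multiset.count r (↑W : Multiset ℝ) = 1 := by
        rw [Multiset.coe_count]
        exact List.count_eq_one_of_mem hnodup hr
      rw [hc1]
      rw [Multiset.one_le_count_iff_mem]
      rw [Polynomial.mem_roots hp]
      obtain ⟨i, hi⟩ := List.mem_ofFn.mp (hW ▸ hr)
      exact hi ▸ hroots i i.isLt
    · have hc0 : Multiset.count r (↑W : Multiset ℝ) = 0 := by
        rw [Multiset.coe_count]
        exact List.count_eq_zero_of_not_mem hr
      simp [hc0]
  have hcard : Multiset.card (↑W : Multiset ℝ) = n := by
    rw [Multiset.coe_card, hlen]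
  have heq : p.roots = (↑W : Multiset ℝ) := by
    symm
    apply Multiset.eq_of_le_of_card_le hle
    rw [hcard, ← hdeg]
    exact Polynomial.card_roots' p
  have hrr : RealRooted p := by
    rw [RealRooted, heq, hcard, hdeg]
  have hWsorted : W.Pairwise (· ≤ ·) := by
    rw [hW]
    rw [List.pairwise_ofFn]
    intro i j hij
    exact le_of_lt (hmono i j hij j.isLt)
  have hrlW : rootList p = W := by
    apply List.Perm.eq_of_pairwise' (rootList_sorted _) hWsorted
    rw [← Multiset.coe_eq_coe, rootList_coe, heq]
  refine ⟨hrr, hrlW, ?_⟩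
  rw [← hrlW]
  exact decomp hp hrr


lemma mem_of_getD {L : List ℝ} {i : ℕ} (hi : i < L.length) : L.getD i 0 ∈ L := by
  rw [List.getD_eq_getElem L 0 hi]
  exact List.getElem_mem _

lemma getD_ofFn {n : ℕ} (w : ℕ → ℝ) {i : ℕ} (hi : i < n) :
    (List.ofFn (fun j : Fin n => w j)).getD i 0 = w i := by
  rw [List.getD_eq_getElem _ 0 (by simpa using hi), List.getElem_ofFn]

/-- index is not a member helper -/
lemma not_mem_of_strict {L : List ℝ} (hs : L.Pairwise (· ≤ ·)) {t : ℝ} {i : ℕ}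
    (hlow : ∀ j < L.length, j < i → L.getD j 0 < t)
    (hhigh : ∀ j < L.length, i ≤ j → t < L.getD j 0) : t ∉ L := by
  intro hmem
  obtain ⟨j, hj⟩ := List.get_of_mem hmem
  have hjlen : (j : ℕ) < L.length := j.isLt
  have hgd : L.getD (j : ℕ) 0 = t := by
    rw [List.getD_eq_getElem _ 0 hjlen]
    simpa using hj
  rcases lt_or_ge (j : ℕ) i with h | h
  · exact absurd hgd (ne_of_lt (hlow _ hjlen h))
  · exact absurd hgd (ne_of_gt (hhigh _ hjlen h))

/-- the combination, written with C-multiplications -/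
lemma comb_eval (bv bu : ℝ) (v u : List ℝ) (t : ℝ) :
    (comb bv bu v u).eval t = bv * (poly v).eval t + bu * (poly u).eval t := by
  simp [comb]

lemma comb_coeff (bv bu : ℝ) (v u : List ℝ) (k : ℕ) :
    (comb bv bu v u).coeff k = bv * (poly v).coeff k + bu * (poly u).coeff k := by
  simp [comb, Polynomial.coeff_C_mul]

lemma comb_natDegree_le (bv bu : ℝ) (v u : List ℝ) (n : ℕ)
    (hv : v.length ≤ n) (hu : u.length ≤ n) : (comb bv bu v u).natDegree ≤ n := by
  apply le_trans (Polynomial.natDegree_add_le _ _)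
  apply max_le
  · apply le_trans (Polynomial.natDegree_mul_le)
    simp [poly_natDegree, hv]
  · apply le_trans (Polynomial.natDegree_mul_le)
    simp [poly_natDegree, hu]

/-- SUB, equal-degree strict case -/
lemma SUB_eq (n : ℕ) (u v : List ℝ) (hu : u.Pairwise (· ≤ ·)) (hv : v.Pairwise (· ≤ ·))
    (hul : u.length = n) (hvl : v.length = n)
    (hvu : ∀ i < n, v.getD i 0 < u.getD i 0)
    (huv : ∀ i, i + 1 < n → u.getD i 0 < v.getD (i + 1) 0)
    (A B α β : ℝ) (hA : 0 < A) (hB : 0 < B) (hα : 0 ≤ α) (hβ : 0 < β) :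
    ∃ w : List ℝ, w.Pairwise (· ≤ ·) ∧ w.length = n ∧
      (∀ i < n, v.getD i 0 < w.getD i 0 ∧ w.getD i 0 ≤ u.getD i 0) ∧
      RealRooted (comb (α*B) (β*A) v u) ∧ rootList (comb (α*B) (β*A) v u) = w ∧
      comb (α*B) (β*A) v u = C (α*B + β*A) * poly w := by
  set p := comb (α*B) (β*A) v u with hp
  -- degree and leading coefficient
  have hcoeffn : p.coeff n = α*B + β*A := by
    rw [hp, comb_coeff]
    have h1 : (poly v).coeff n = 1 := by
      have := (poly_monic v).coeff_natDegree
      rwa [poly_natDegree, hvl] at this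
    have h2 : (poly u).coeff n = 1 := by
      have := (poly_monic u).coeff_natDegree
      rwa [poly_natDegree, hul] at this
    rw [h1, h2]; ring
  have hlcpos : 0 < α*B + β*A := by positivity
  have hdeg : p.natDegree = n := by
    apply le_antisymm
    · exact comb_natDegree_le _ _ _ _ _ (le_of_eq hvl) (le_of_eq hul)
    · apply Polynomial.le_natDegree_of_ne_zero
      rw [hcoeffn]; exact ne_of_gt hlcpos
  have hlc : p.leadingCoeff = α*B + β*A := by
    rw [Polynomial.leadingCoeff, hdeg, hcoeffn]
  -- nonmembership and counts
  have hvnotinu : ∀ i < n, v.getD i 0 ∉ u := by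
    intro i hin
    apply not_mem_of_strict hu (i := i)
    · intro j hjlen hji
      calc u.getD j 0 ≤ u.getD (i-1) 0 := sorted_getD_le hu (by omega) (by omega)
      _ < v.getD i 0 := by
          have := huv (i-1) (by omega)
          have hii : i - 1 + 1 = i := by omega
          rwa [hii] at this
    · intro j hjlen hij
      calc v.getD i 0 < u.getD i 0 := hvu i hin
      _ ≤ u.getD j 0 := sorted_getD_le hu hij hjlen
  have hunotinv : ∀ i < n, u.getD i 0 ∉ v := by
    intro i hin
    apply not_mem_of_strict hv (i := i+1)
    · intro j hjlen hji
      calc v.getD j 0 ≤ v.getD i 0 := sorted_getD_le hv (by omega) (by omega)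
      _ < u.getD i 0 := hvu i hin
    · intro j hjlen hij
      calc u.getD i 0 < v.getD (i+1) 0 := huv i (by omega)
      _ ≤ v.getD j 0 := sorted_getD_le hv hij hjlen
  have hcntu : ∀ i < n, cnt u (v.getD i 0) = i := by
    intro i hin
    have hle : cnt u (v.getD i 0) ≤ i := by
      by_contra hcon
      push_neg at hcon
      have := (S_iff u hu i _ (by omega)).mpr hcon
      exact absurd this (not_lt.mpr (le_of_lt (hvu i hin)))
    have hge : i ≤ cnt u (v.getD i 0) := by
      rcases Nat.eq_zero_or_pos i with rfl | hipos
      · exact Nat.zero_le _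
      · have h1 : u.getD (i-1) 0 < v.getD i 0 := by
          have := huv (i-1) (by omega)
          have hii : i - 1 + 1 = i := by omega
          rwa [hii] at this
        have := (S_iff u hu (i-1) _ (by omega)).mp h1
        omega
    omega
  have hcntv : ∀ i < n, cnt v (u.getD i 0) = i + 1 := by
    intro i hin
    have hge : i + 1 ≤ cnt v (u.getD i 0) := by
      have := (S_iff v hv i _ (by omega)).mp (hvu i hin)
      omega
    have hle : cnt v (u.getD i 0) ≤ i + 1 := by
      by_cases hi1 : i + 1 < n
      · by_contra hcon
        push_neg at hcon
        have := (S_iff v hv (i+1) _ (by omega)).mpr hcon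
        exact absurd this (not_lt.mpr (le_of_lt (huv i hi1)))
      · have := cnt_le_length v (u.getD i 0)
        omega
    omega
  -- sign conditions
  have hlo : ∀ i < n, 0 < (-1 : ℝ) ^ (n - i) * p.eval (v.getD i 0) := by
    intro i hin
    rw [hp, comb_eval, poly_eval_mem (mem_of_getD (show i < v.length by omega)), mul_zero, zero_add]
    have := sgn_eval' (hvnotinu i hin)
    rw [hul, hcntu i hin] at this
    calc (0:ℝ) < (β*A) * ((-1 : ℝ) ^ (n - i) * (poly u).eval (v.getD i 0)) := by positivity
    _ = (-1 : ℝ) ^ (n - i) * ((β*A) * (poly u).eval (v.getD i 0)) := by ring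
  have hhi : ∀ i < n, 0 ≤ (-1 : ℝ) ^ (n - i - 1) * p.eval (u.getD i 0) := by
    intro i hin
    rw [hp, comb_eval, poly_eval_mem (mem_of_getD (show i < u.length by omega)), mul_zero, add_zero]
    have := sgn_eval' (hunotinv i hin)
    rw [hvl, hcntv i hin] at this
    have hexp : n - (i+1) = n - i - 1 := by omega
    rw [hexp] at this
    calc (0:ℝ) ≤ (α*B) * ((-1 : ℝ) ^ (n - i - 1) * (poly v).eval (u.getD i 0)) := by positivity
    _ = (-1 : ℝ) ^ (n - i - 1) * ((α*B) * (poly v).eval (u.getD i 0)) := by ring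
  obtain ⟨w, hw⟩ := ROOTS p n (fun i => v.getD i 0) (fun i => u.getD i 0)
    (fun i h => hvu i h) hlo hhi
  have hmono : ∀ i j, i < j → j < n → w i < w j := by
    intro i j hij hjn
    calc w i ≤ u.getD i 0 := (hw i (by omega)).2.1
    _ ≤ u.getD (j-1) 0 := sorted_getD_le hu (by omega) (by omega)
    _ < v.getD j 0 := by
        have := huv (j-1) (by omega)
        have hjj : j - 1 + 1 = j := by omega
        rwa [hjj] at this
    _ < w j := (hw j hjn).1
  obtain ⟨hrr, hrl, heqn⟩ := CONCLUDE p n w hdeg (hlc ▸ hlcpos) hmono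
    (fun i h => (hw i h).2.2)
  refine ⟨List.ofFn (fun i : Fin n => w i), ?_, by simp, ?_, hrr, hrl, by rw [heqn, hlc]⟩
  · rw [← hrl]; exact Multiset.pairwise_sort _ _
  · intro i hin
    rw [getD_ofFn w hin]
    exact ⟨(hw i hin).1, (hw i hin).2.1⟩


lemma prod_sub_comm : ∀ (L : List ℝ) (t : ℝ),
    (L.map (fun x => t - x)).prod = (-1 : ℝ) ^ L.length * (L.map (fun x => x - t)).prod := by
  intro L
  induction L with
  | nil => intro t; simp
  | cons x L ih =>
    intro t
    simp only [List.map_cons, List.prod_cons, List.length_cons, ih t, pow_succ]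
    ring

lemma list_prod_pos : ∀ (L : List ℝ), (∀ x ∈ L, 0 < x) → 0 < L.prod := by
  intro L
  induction L with
  | nil => intro _; simp
  | cons x L ih =>
    intro h
    rw [List.prod_cons]
    exact mul_pos (h x (List.mem_cons_self)) (ih fun y hy => h y (List.mem_cons_of_mem _ hy))

lemma forall_mem_of_getD {L : List ℝ} {P : ℝ → Prop}
    (h : ∀ i < L.length, P (L.getD i 0)) : ∀ x ∈ L, P x := by
  intro x hx
  obtain ⟨j, hj⟩ := List.get_of_mem hx
  have := h j j.isLt
  rw [List.getD_eq_getElem L 0 j.isLt] at this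
  rwa [show L[(j:ℕ)] = x from hj] at this

/-- product comparison for the lower bound point -/
lemma key_prod : ∀ (v u : List ℝ) (T : ℝ), u.length = v.length + 1 →
    (∀ i < v.length, T < v.getD i 0) →
    (∀ i, i + 1 < u.length → v.getD i 0 ≤ u.getD (i+1) 0) →
    T < u.getD 0 0 →
    (u.getD 0 0 - T) * (v.map (fun x => x - T)).prod ≤ (u.map (fun x => x - T)).prod := by
  intro v
  induction v with
  | nil =>
    intro u T hlen _ _ _
    match u with
    | [a] => simp
  | cons b v' ih =>
    intro u T hlen hvT hinter hu0
    match u with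
    | a :: u'' =>
      have hlen' : u''.length = v'.length + 1 := by simpa using hlen
      have hvT' : ∀ i < v'.length, T < v'.getD i 0 := by
        intro i hi
        have := hvT (i+1) (by simpa using Nat.succ_lt_succ hi)
        simpa using this
      have hinter' : ∀ i, i + 1 < u''.length → v'.getD i 0 ≤ u''.getD (i+1) 0 := by
        intro i hi
        have := hinter (i+1) (by simp; omega)
        simpa using this
      have hTb : T < b := by simpa using hvT 0 (by simp)
      have hbu : b ≤ u''.getD 0 0 := by
        have := hinter 0 (by simp; omega)
        simpa using this
      have hu0'' : T < u''.getD 0 0 := lt_of_lt_of_le hTb hbu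
      have hih := ih u'' T hlen' hvT' hinter' hu0''
      have hprodpos : 0 < (v'.map (fun x => x - T)).prod := by
        apply list_prod_pos
        intro y hy
        obtain ⟨x, hx, rfl⟩ := List.mem_map.mp hy
        have : T < x := forall_mem_of_getD hvT' x hx
        linarith
      have hTa : T < a := by simpa using hu0
      simp only [List.map_cons, List.prod_cons, List.getD_cons_zero]
      calc (a - T) * ((b - T) * (v'.map (fun x => x - T)).prod)
          ≤ (a - T) * ((u''.getD 0 0 - T) * (v'.map (fun x => x - T)).prod) := by
            apply mul_le_mul_of_nonneg_left _ (by linarith)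
            apply mul_le_mul_of_nonneg_right (by linarith) (le_of_lt hprodpos)
      _ ≤ (a - T) * (u''.map (fun x => x - T)).prod := by
            apply mul_le_mul_of_nonneg_left hih (by linarith)

/-- SUB, off-by-one strict case -/
lemma SUB_lt (n m : ℕ) (u v : List ℝ) (hu : u.Pairwise (· ≤ ·)) (hv : v.Pairwise (· ≤ ·))
    (hul : u.length = n) (hvl : v.length = m) (hnm : n = m + 1)
    (hvu : ∀ i < m, u.getD i 0 < v.getD i 0)
    (huv : ∀ i, i + 1 < n → v.getD i 0 < u.getD (i + 1) 0)
    (A B α β : ℝ) (hA : 0 < A) (hB : 0 < B) (hα : 0 ≤ α) (hβ : 0 < β) :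
    ∃ w : List ℝ, w.Pairwise (· ≤ ·) ∧ w.length = n ∧
      (∀ i < n, w.getD i 0 ≤ u.getD i 0) ∧
      (∀ i, i + 1 < n → v.getD i 0 < w.getD (i + 1) 0) ∧
      RealRooted (comb (α*B) (β*A) v u) ∧ rootList (comb (α*B) (β*A) v u) = w ∧
      comb (α*B) (β*A) v u = C (β*A) * poly w := by
  set p := comb (α*B) (β*A) v u with hp
  have hcoeffn : p.coeff n = β*A := by
    rw [hp, comb_coeff]
    have h1 : (poly v).coeff n = 0 := by
      apply Polynomial.coeff_eq_zero_of_natDegree_lt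
      rw [poly_natDegree, hvl]; omega
    have h2 : (poly u).coeff n = 1 := by
      have := (poly_monic u).coeff_natDegree
      rwa [poly_natDegree, hul] at this
    rw [h1, h2]; ring
  have hlcpos : 0 < β*A := by positivity
  have hdeg : p.natDegree = n := by
    apply le_antisymm
    · exact comb_natDegree_le _ _ _ _ _ (by omega) (le_of_eq hul)
    · apply Polynomial.le_natDegree_of_ne_zero
      rw [hcoeffn]; exact ne_of_gt hlcpos
  have hlc : p.leadingCoeff = β*A := by
    rw [Polynomial.leadingCoeff, hdeg, hcoeffn]
  -- nonmembership and counts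
  have hvnotinu : ∀ i < m, v.getD i 0 ∉ u := by
    intro i him
    apply not_mem_of_strict hu (i := i+1)
    · intro j hjlen hji
      calc u.getD j 0 ≤ u.getD i 0 := sorted_getD_le hu (by omega) (by omega)
      _ < v.getD i 0 := hvu i him
    · intro j hjlen hij
      calc v.getD i 0 < u.getD (i+1) 0 := huv i (by omega)
      _ ≤ u.getD j 0 := sorted_getD_le hu hij hjlen
  have hunotinv : ∀ i < n, u.getD i 0 ∉ v := by
    intro i hin
    apply not_mem_of_strict hv (i := i)
    · intro j hjlen hji
      calc v.getD j 0 ≤ v.getD (i-1) 0 := sorted_getD_le hv (by omega) (by omega)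
      _ < u.getD i 0 := by
          have := huv (i-1) (by omega)
          have hii : i - 1 + 1 = i := by omega
          rwa [hii] at this
    · intro j hjlen hij
      calc u.getD i 0 < v.getD i 0 := hvu i (by omega)
      _ ≤ v.getD j 0 := sorted_getD_le hv hij hjlen
  have hcntu : ∀ i < m, cnt u (v.getD i 0) = i + 1 := by
    intro i him
    have hge : i + 1 ≤ cnt u (v.getD i 0) := by
      have := (S_iff u hu i _ (by omega)).mp (hvu i him)
      omega
    have hle : cnt u (v.getD i 0) ≤ i + 1 := by
      by_contra hcon
      push_neg at hcon
      have := (S_iff u hu (i+1) _ (by omega)).mpr hcon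
      exact absurd this (not_lt.mpr (le_of_lt (huv i (by omega))))
    omega
  have hcntv : ∀ i < n, cnt v (u.getD i 0) = i := by
    intro i hin
    have hge : i ≤ cnt v (u.getD i 0) := by
      rcases Nat.eq_zero_or_pos i with rfl | hipos
      · exact Nat.zero_le _
      · have h1 : v.getD (i-1) 0 < u.getD i 0 := by
          have := huv (i-1) (by omega)
          have hii : i - 1 + 1 = i := by omega
          rwa [hii] at this
        have := (S_iff v hv (i-1) _ (by omega)).mp h1
        omega
    have hle : cnt v (u.getD i 0) ≤ i := by
      by_cases him : i < m
      · by_contra hcon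
        push_neg at hcon
        have := (S_iff v hv i _ (by omega)).mpr hcon
        exact absurd this (not_lt.mpr (le_of_lt (hvu i him)))
      · have := cnt_le_length v (u.getD i 0)
        omega
    omega
  -- the far-left point
  set T : ℝ := u.getD 0 0 - (α*B)/(β*A) - 1 with hT
  have hTu0 : T < u.getD 0 0 := by
    rw [hT]
    have : 0 ≤ (α*B)/(β*A) := by positivity
    linarith
  have hTv : ∀ i < m, T < v.getD i 0 := by
    intro i him
    calc T < u.getD 0 0 := hTu0
    _ ≤ u.getD i 0 := sorted_getD_le hu (Nat.zero_le _) (by omega)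
    _ < v.getD i 0 := hvu i him
  have hTn : 0 < (-1 : ℝ) ^ n * p.eval T := by
    rw [hp, comb_eval, poly_eval, poly_eval]
    rw [prod_sub_comm v T, prod_sub_comm u T, hvl, hul]
    set Qv := (v.map (fun x => x - T)).prod with hQv
    set Qu := (u.map (fun x => x - T)).prod with hQu
    have hQvpos : 0 < Qv := by
      apply list_prod_pos
      intro y hy
      obtain ⟨x, hx, rfl⟩ := List.mem_map.mp hy
      have : T < x := forall_mem_of_getD (fun i hi => hTv i (hvl ▸ hi)) x hx
      linarith
    have hkey : (u.getD 0 0 - T) * Qv ≤ Qu := by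
      apply key_prod v u T (by omega) (fun i hi => hTv i (hvl ▸ hi)) _ hTu0
      intro i hi
      exact le_of_lt (huv i (by omega))
    have hu0T : u.getD 0 0 - T = (α*B)/(β*A) + 1 := by rw [hT]; ring
    have hexpand : (-1:ℝ) ^ n * (α * B * ((-1:ℝ) ^ m * Qv) + β * A * ((-1:ℝ) ^ n * Qu))
        = β * A * Qu - α * B * Qv := by
      have h1 : (-1:ℝ) ^ n * (-1:ℝ) ^ n = 1 := by
        rw [← pow_add]
        exact Even.neg_one_pow ⟨n, rfl⟩
      have h2 : (-1:ℝ) ^ n * (-1:ℝ) ^ m = -1 := by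
        rw [← pow_add]
        refine Odd.neg_one_pow ⟨m, by omega⟩
      linear_combination (β * A * Qu) * h1 + (α * B * Qv) * h2
    rw [hexpand]
    have : α * B * Qv < β * A * ((α*B)/(β*A) + 1) * Qv := by
      have hba : 0 < β * A := by positivity
      have : β * A * ((α*B)/(β*A) + 1) = α*B + β*A := by
        field_simp
      rw [this]
      have : 0 < β*A := hba
      nlinarith
    calc (0:ℝ) < β * A * ((α*B)/(β*A) + 1) * Qv - α * B * Qv := by linarith
    _ = β * A * ((u.getD 0 0 - T) * Qv) - α * B * Qv := by rw [hu0T]; ring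
    _ ≤ β * A * Qu - α * B * Qv := by
        have hba : 0 < β * A := by positivity
        nlinarith
  -- sign conditions
  classical
  set lo : ℕ → ℝ := fun i => if i = 0 then T else v.getD (i-1) 0 with hlo_def
  have hlo : ∀ i < n, 0 < (-1 : ℝ) ^ (n - i) * p.eval (lo i) := by
    intro i hin
    rcases Nat.eq_zero_or_pos i with rfl | hipos
    · simpa [hlo_def] using hTn
    · have hloi : lo i = v.getD (i-1) 0 := by simp [hlo_def, Nat.pos_iff_ne_zero.mp hipos]
      rw [hloi, hp, comb_eval, poly_eval_mem (mem_of_getD (show i-1 < v.length by omega)),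
        mul_zero, zero_add]
      have := sgn_eval' (hvnotinu (i-1) (by omega))
      rw [hul, hcntu (i-1) (by omega)] at this
      have hexp : n - (i - 1 + 1) = n - i := by omega
      rw [hexp] at this
      calc (0:ℝ) < (β*A) * ((-1 : ℝ) ^ (n - i) * (poly u).eval (v.getD (i-1) 0)) := by positivity
      _ = (-1 : ℝ) ^ (n - i) * ((β*A) * (poly u).eval (v.getD (i-1) 0)) := by ring
  have hhi : ∀ i < n, 0 ≤ (-1 : ℝ) ^ (n - i - 1) * p.eval (u.getD i 0) := by
    intro i hin
    rw [hp, comb_eval, poly_eval_mem (mem_of_getD (show i < u.length by omega)),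
      mul_zero, add_zero]
    have := sgn_eval' (hunotinv i hin)
    rw [hvl, hcntv i hin] at this
    have hexp : m - i = n - i - 1 := by omega
    rw [hexp] at this
    calc (0:ℝ) ≤ (α*B) * ((-1 : ℝ) ^ (n - i - 1) * (poly v).eval (u.getD i 0)) := by positivity
    _ = (-1 : ℝ) ^ (n - i - 1) * ((α*B) * (poly v).eval (u.getD i 0)) := by ring
  have hlohi : ∀ i < n, lo i < u.getD i 0 := by
    intro i hin
    rcases Nat.eq_zero_or_pos i with rfl | hipos
    · simpa [hlo_def] using hTu0
    · have hloi : lo i = v.getD (i-1) 0 := by simp [hlo_def, Nat.pos_iff_ne_zero.mp hipos]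
      rw [hloi]
      have := huv (i-1) (by omega)
      have hii : i - 1 + 1 = i := by omega
      rwa [hii] at this
  obtain ⟨w, hw⟩ := ROOTS p n lo (fun i => u.getD i 0) hlohi hlo hhi
  have hmono : ∀ i j, i < j → j < n → w i < w j := by
    intro i j hij hjn
    have hj1 : lo j = v.getD (j-1) 0 := by simp [hlo_def, Nat.pos_iff_ne_zero.mp (by omega : 0 < j)]
    calc w i ≤ u.getD i 0 := (hw i (by omega)).2.1
    _ ≤ u.getD (j-1) 0 := sorted_getD_le hu (by omega) (by omega)
    _ < v.getD (j-1) 0 := hvu (j-1) (by omega)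
    _ < w j := by rw [← hj1]; exact (hw j hjn).1
  obtain ⟨hrr, hrl, heqn⟩ := CONCLUDE p n w hdeg (hlc ▸ hlcpos) hmono
    (fun i h => (hw i h).2.2)
  refine ⟨List.ofFn (fun i : Fin n => w i), ?_, by simp, ?_, ?_, hrr, hrl, by rw [heqn, hlc]⟩
  · rw [← hrl]; exact Multiset.pairwise_sort _ _
  · intro i hin
    rw [getD_ofFn w hin]
    exact (hw i hin).2.1
  · intro i hi1
    rw [getD_ofFn w (by omega : i + 1 < n)]
    have := (hw (i+1) (by omega)).1
    have hloi : lo (i+1) = v.getD i 0 := by simp [hlo_def]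
    rwa [hloi] at this


lemma cnt_erase {r : ℝ} {L : List ℝ} (h : r ∈ L) (t : ℝ) :
    cnt L t = cnt (L.erase r) t + (if r < t then 1 else 0) := by
  rw [cnt_perm (List.perm_cons_erase h) t, cnt_cons]

lemma cnt_oi (r : ℝ) (L : List ℝ) (t : ℝ) :
    cnt (L.orderedInsert (· ≤ ·) r) t = cnt L t + (if r < t then 1 else 0) := by
  rw [cnt_perm (List.perm_orderedInsert _ r L) t, cnt_cons]

/-- GRAND lemma, equal degree case -/
lemma GRAND_eq : ∀ (N : ℕ) (u v : List ℝ), u.length = N →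
    u.Pairwise (· ≤ ·) → v.Pairwise (· ≤ ·) → v.length = N →
    (∀ t, cnt u t ≤ cnt v t) → (∀ t, cnt v t ≤ cnt u t + 1) →
    ∀ A B a b c d : ℝ, 0 < A → 0 < B → 0 ≤ a → 0 < b → 0 ≤ c → 0 < d → a*d ≤ b*c →
    ∃ w z : List ℝ, w.Pairwise (· ≤ ·) ∧ z.Pairwise (· ≤ ·) ∧ w.length = N ∧ z.length = N ∧
      (∀ t, cnt u t ≤ cnt w t) ∧ (∀ t, cnt w t ≤ cnt v t) ∧
      (∀ t, cnt u t ≤ cnt z t) ∧ (∀ t, cnt z t ≤ cnt v t) ∧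
      (∀ t, cnt w t ≤ cnt z t) ∧
      comb (a*B) (b*A) v u = C (a*B + b*A) * poly w ∧
      comb (c*B) (d*A) v u = C (c*B + d*A) * poly z := by
  intro N
  induction N using Nat.strong_induction_on with
  | _ N IH =>
    intro u v hul hu hv hvl h1 h2 A B a b c d hA hB ha hb hc hd hdet
    by_cases hcom : ∃ r, r ∈ u ∧ r ∈ v
    · -- common root case
      obtain ⟨r, hru, hrv⟩ := hcom
      have hN : 1 ≤ N := by
        rcases u with _ | ⟨x, u'⟩
        · simp at hru
        · simp at hul; omega
      set u' := u.erase r with hu'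
      set v' := v.erase r with hv'
      have hu's : u'.Pairwise (· ≤ ·) := hu.sublist List.erase_sublist
      have hv's : v'.Pairwise (· ≤ ·) := hv.sublist List.erase_sublist
      have hu'l : u'.length = N - 1 := by
        rw [hu', List.length_erase_of_mem hru, hul]
      have hv'l : v'.length = N - 1 := by
        rw [hv', List.length_erase_of_mem hrv, hvl]
      have hcu : ∀ t, cnt u t = cnt u' t + (if r < t then 1 else 0) :=
        fun t => cnt_erase hru t
      have hcv : ∀ t, cnt v t = cnt v' t + (if r < t then 1 else 0) :=
        fun t => cnt_erase hrv t
      obtain ⟨w', z', hws, hzs, hwl, hzl, c1, c2, c3, c4, c5, e1, e2⟩ :=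
        IH (N-1) (by omega) u' v' hu'l hu's hv's hv'l
          (fun t => by have := h1 t; rw [hcu t, hcv t] at this; omega)
          (fun t => by have := h2 t; rw [hcu t, hcv t] at this; omega)
          A B a b c d hA hB ha hb hc hd hdet
      classical
      refine ⟨w'.orderedInsert (· ≤ ·) r, z'.orderedInsert (· ≤ ·) r,
        hws.orderedInsert r w', hzs.orderedInsert r z', ?_, ?_, ?_, ?_, ?_, ?_, ?_, ?_, ?_⟩
      · rw [List.orderedInsert_length]; omega
      · rw [List.orderedInsert_length]; omega
      · intro t; rw [cnt_oi, hcu t]; have := c1 t; omega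
      · intro t; rw [cnt_oi, hcv t]; have := c2 t; omega
      · intro t; rw [cnt_oi, hcu t]; have := c3 t; omega
      · intro t; rw [cnt_oi, hcv t]; have := c4 t; omega
      · intro t; rw [cnt_oi, cnt_oi]; have := c5 t; omega
      · have hsplit : comb (a*B) (b*A) v u = (X - C r) * comb (a*B) (b*A) v' u' := by
          unfold comb
          rw [poly_erase hru, poly_erase hrv]
          ring
        rw [hsplit, e1, poly_perm (List.perm_orderedInsert (· ≤ ·) r w'), poly_cons]
        ring
      · have hsplit : comb (c*B) (d*A) v u = (X - C r) * comb (c*B) (d*A) v' u' := by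
          unfold comb
          rw [poly_erase hru, poly_erase hrv]
          ring
        rw [hsplit, e2, poly_perm (List.perm_orderedInsert (· ≤ ·) r z'), poly_cons]
        ring
    · -- strict case
      push_neg at hcom
      have hvu : ∀ i < N, v.getD i 0 < u.getD i 0 := by
        intro i hiN
        have hle := M1b hv hu 0 (show ∀ t, cnt u t ≤ cnt v t + 0 by intro t; have := h1 t; omega) i
          (show i + 0 < u.length by omega) (show i < v.length by omega)
        rcases lt_or_eq_of_le hle with h | h
        · simpa using h
        · exfalso
          have h' : v.getD i 0 = u.getD i 0 := by simpa using h
          refine hcom (u.getD i 0) (mem_of_getD (show i < u.length by omega)) ?_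
          rw [← h']
          exact mem_of_getD (show i < v.length by omega)
      have huv : ∀ i, i + 1 < N → u.getD i 0 < v.getD (i + 1) 0 := by
        intro i hiN
        have hle := M1b hu hv 1 h2 i (show i + 1 < v.length by omega) (show i < u.length by omega)
        rcases lt_or_eq_of_le hle with h | h
        · exact h
        · exfalso
          refine hcom (u.getD i 0) (mem_of_getD (show i < u.length by omega)) ?_
          rw [h]
          exact mem_of_getD (show i + 1 < v.length by omega)
      obtain ⟨w, hws, hwl, hwb, _, _, ew⟩ :=
        SUB_eq N u v hu hv hul hvl hvu huv A B a b hA hB ha hb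
      obtain ⟨z, hzs, hzl, hzb, _, _, ez⟩ :=
        SUB_eq N u v hu hv hul hvl hvu huv A B c d hA hB hc hd
      -- determinant comparison : z ≤ w pointwise
      have hzw : ∀ i < N, z.getD i 0 ≤ w.getD i 0 := by
        intro i hiN
        by_contra hcon
        push_neg at hcon
        set x := w.getD i 0 with hx
        -- x is a root of p
        have hpx : (comb (a*B) (b*A) v u).eval x = 0 := by
          rw [ew]
          rw [eval_mul, hx, poly_eval_mem (mem_of_getD (show i < w.length by omega)), mul_zero]
        rw [comb_eval] at hpx
        -- x not in v, count = i+1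
        have hxv : x ∉ v := by
          apply not_mem_of_strict hv (i := i+1)
          · intro j hjlen hji
            calc v.getD j 0 ≤ v.getD i 0 := sorted_getD_le hv (by omega) (by omega)
            _ < x := (hwb i hiN).1
          · intro j hjlen hij
            calc x ≤ u.getD i 0 := (hwb i hiN).2
            _ < v.getD (i+1) 0 := huv i (by omega)
            _ ≤ v.getD j 0 := sorted_getD_le hv hij hjlen
        have hcntvx : cnt v x = i + 1 := by
          have hge : i + 1 ≤ cnt v x := by
            have := (S_iff v hv i x (by omega)).mp (hwb i hiN).1
            omega
          have hle : cnt v x ≤ i + 1 := by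
            by_cases hi1 : i + 1 < N
            · by_contra hcc
              push_neg at hcc
              have := (S_iff v hv (i+1) x (by omega)).mpr hcc
              have h2 := huv i hi1
              have h3 := (hwb i hiN).2
              linarith
            · have := cnt_le_length v x; omega
          omega
        have hsgnv := sgn_eval' hxv
        rw [hvl, hcntvx] at hsgnv
        -- x not in z, count = i
        have hxz : x ∉ z := by
          apply not_mem_of_strict hzs (i := i)
          · intro j hjlen hji
            calc z.getD j 0 ≤ z.getD (i-1) 0 := sorted_getD_le hzs (by omega) (by omega)
            _ ≤ u.getD (i-1) 0 := (hzb (i-1) (by omega)).2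
            _ < v.getD i 0 := by
                have := huv (i-1) (by omega)
                have hii : i - 1 + 1 = i := by omega
                rwa [hii] at this
            _ < x := (hwb i hiN).1
          · intro j hjlen hij
            calc x < z.getD i 0 := hcon
            _ ≤ z.getD j 0 := sorted_getD_le hzs hij hjlen
        have hcntzx : cnt z x = i := by
          have hge : i ≤ cnt z x := by
            rcases Nat.eq_zero_or_pos i with rfl | hipos
            · exact Nat.zero_le _
            · have hlt : z.getD (i-1) 0 < x := by
                calc z.getD (i-1) 0 ≤ u.getD (i-1) 0 := (hzb (i-1) (by omega)).2
                _ < v.getD i 0 := by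
                    have := huv (i-1) (by omega)
                    have hii : i - 1 + 1 = i := by omega
                    rwa [hii] at this
                _ < x := (hwb i hiN).1
              have := (S_iff z hzs (i-1) x (by omega)).mp hlt
              omega
          have hle : cnt z x ≤ i := by
            by_contra hcc
            push_neg at hcc
            have := (S_iff z hzs i x (by omega)).mpr hcc
            linarith
          omega
        -- sign of q at x
        have hqx : (comb (c*B) (d*A) v u).eval x * b = B * (b*c - a*d) * (poly v).eval x := by
          rw [comb_eval]
          have : (b*A) * (poly u).eval x = -((a*B) * (poly v).eval x) := by linarith
          have hu_eval : (poly u).eval x = -((a*B) * (poly v).eval x) / (b*A) := by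
            field_simp at this ⊢
            linarith
          rw [hu_eval]
          field_simp
          ring
        have hqz : (comb (c*B) (d*A) v u).eval x = (c*B + d*A) * (poly z).eval x := by
          rw [ez]; simp
        have hsgnz := sgn_eval' hxz
        rw [hzl, hcntzx] at hsgnz
        -- contradiction via signs
        have hNi : N - (i+1) = N - i - 1 := by omega
        have hflip : (-1 : ℝ) ^ (N - i) = -(-1 : ℝ) ^ (N - i - 1) := by
          obtain ⟨k, hk⟩ : ∃ k, N - i = k + 1 := ⟨N - i - 1, by omega⟩
          have hk2 : N - i - 1 = k := by omega
          rw [hk2, hk, pow_succ]; ring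
        rw [hNi] at hsgnv
        have hpos1 : 0 ≤ (-1 : ℝ) ^ (N - i - 1) * ((comb (c*B) (d*A) v u).eval x * b) := by
          rw [hqx]
          have hfac : 0 ≤ B * (b*c - a*d) := by nlinarith
          calc (0:ℝ) ≤ (B * (b*c - a*d)) * ((-1 : ℝ) ^ (N - i - 1) * (poly v).eval x) :=
                mul_nonneg hfac (le_of_lt hsgnv)
          _ = (-1 : ℝ) ^ (N - i - 1) * (B * (b*c - a*d) * (poly v).eval x) := by ring
        have hneg1 : (-1 : ℝ) ^ (N - i - 1) * ((comb (c*B) (d*A) v u).eval x * b) < 0 := by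
          have h0 : (-1 : ℝ) ^ (N - i) * (poly z).eval x > 0 := hsgnz
          rw [hflip] at h0
          have h0' : (-1:ℝ) ^ (N - i - 1) * (poly z).eval x < 0 := by nlinarith [h0]
          have hlcz : 0 < c*B + d*A := by positivity
          rw [hqz]
          have hre : (-1:ℝ)^(N-i-1) * ((c*B+d*A) * (poly z).eval x * b)
              = ((-1:ℝ)^(N-i-1) * (poly z).eval x) * ((c*B+d*A)*b) := by ring
          rw [hre]
          exact mul_neg_of_neg_of_pos h0' (mul_pos hlcz hb)
        linarith
      refine ⟨w, z, hws, hzs, hwl, hzl, ?_, ?_, ?_, ?_, ?_, ew, ez⟩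
      · intro t
        exact le_trans (le_of_eq (by omega : cnt u t = cnt u t)) (by
          have := M1a hws hu 0 (show u.length ≤ w.length + 0 by omega)
            (fun i hi => by simpa using (hwb i (by simp at hi; omega)).2) t
          omega)
      · intro t
        have := M1a hv hws 0 (show w.length ≤ v.length + 0 by omega)
          (fun i hi => by simpa using le_of_lt (hwb i (by simp at hi; omega)).1) t
        omega
      · intro t
        have := M1a hzs hu 0 (show u.length ≤ z.length + 0 by omega)
          (fun i hi => by simpa using (hzb i (by simp at hi; omega)).2) t
        omega
      · intro t
        have := M1a hv hzs 0 (show z.length ≤ v.length + 0 by omega)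
          (fun i hi => by simpa using le_of_lt (hzb i (by simp at hi; omega)).1) t
        omega
      · intro t
        have := M1a hzs hws 0 (show w.length ≤ z.length + 0 by omega)
          (fun i hi => by simpa using hzw i (by simp at hi; omega)) t
        omega

/-- GRAND lemma, off-by-one case -/
lemma GRAND_lt : ∀ (N m : ℕ) (u v : List ℝ), u.length = N → N = m + 1 →
    u.Pairwise (· ≤ ·) → v.Pairwise (· ≤ ·) → v.length = m →
    (∀ t, cnt v t ≤ cnt u t) → (∀ t, cnt u t ≤ cnt v t + 1) →
    ∀ A B a b c d : ℝ, 0 < A → 0 < B → 0 ≤ a → 0 < b → 0 ≤ c → 0 < d → a*d ≤ b*c →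
    ∃ w z : List ℝ, w.Pairwise (· ≤ ·) ∧ z.Pairwise (· ≤ ·) ∧ w.length = N ∧ z.length = N ∧
      (∀ t, cnt u t ≤ cnt w t) ∧ (∀ t, cnt w t ≤ cnt v t + 1) ∧
      (∀ t, cnt u t ≤ cnt z t) ∧ (∀ t, cnt z t ≤ cnt v t + 1) ∧
      (∀ t, cnt w t ≤ cnt z t) ∧
      comb (a*B) (b*A) v u = C (b*A) * poly w ∧
      comb (c*B) (d*A) v u = C (d*A) * poly z := by
  intro N
  induction N using Nat.strong_induction_on with
  | _ N IH =>
    intro m u v hul hNm hu hv hvl h1 h2 A B a b c d hA hB ha hb hc hd hdet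
    by_cases hcom : ∃ r, r ∈ u ∧ r ∈ v
    · -- common root case
      obtain ⟨r, hru, hrv⟩ := hcom
      have hm : 1 ≤ m := by
        rcases v with _ | ⟨x, v'⟩
        · simp at hrv
        · simp at hvl; omega
      set u' := u.erase r with hu'
      set v' := v.erase r with hv'
      have hu's : u'.Pairwise (· ≤ ·) := hu.sublist List.erase_sublist
      have hv's : v'.Pairwise (· ≤ ·) := hv.sublist List.erase_sublist
      have hu'l : u'.length = N - 1 := by
        rw [hu', List.length_erase_of_mem hru, hul]
      have hv'l : v'.length = m - 1 := by
        rw [hv', List.length_erase_of_mem hrv, hvl]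
      have hcu : ∀ t, cnt u t = cnt u' t + (if r < t then 1 else 0) :=
        fun t => cnt_erase hru t
      have hcv : ∀ t, cnt v t = cnt v' t + (if r < t then 1 else 0) :=
        fun t => cnt_erase hrv t
      obtain ⟨w', z', hws, hzs, hwl, hzl, c1, c2, c3, c4, c5, e1, e2⟩ :=
        IH (N-1) (by omega) (m-1) u' v' hu'l (by omega) hu's hv's hv'l
          (fun t => by have := h1 t; rw [hcu t, hcv t] at this; omega)
          (fun t => by have := h2 t; rw [hcu t, hcv t] at this; omega)
          A B a b c d hA hB ha hb hc hd hdet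
      classical
      refine ⟨w'.orderedInsert (· ≤ ·) r, z'.orderedInsert (· ≤ ·) r,
        hws.orderedInsert r w', hzs.orderedInsert r z', ?_, ?_, ?_, ?_, ?_, ?_, ?_, ?_, ?_⟩
      · rw [List.orderedInsert_length]; omega
      · rw [List.orderedInsert_length]; omega
      · intro t; rw [cnt_oi, hcu t]; have := c1 t; omega
      · intro t; rw [cnt_oi, hcv t]; have := c2 t; omega
      · intro t; rw [cnt_oi, hcu t]; have := c3 t; omega
      · intro t; rw [cnt_oi, hcv t]; have := c4 t; omega
      · intro t; rw [cnt_oi, cnt_oi]; have := c5 t; omega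
      · have hsplit : comb (a*B) (b*A) v u = (X - C r) * comb (a*B) (b*A) v' u' := by
          unfold comb
          rw [poly_erase hru, poly_erase hrv]
          ring
        rw [hsplit, e1, poly_perm (List.perm_orderedInsert (· ≤ ·) r w'), poly_cons]
        ring
      · have hsplit : comb (c*B) (d*A) v u = (X - C r) * comb (c*B) (d*A) v' u' := by
          unfold comb
          rw [poly_erase hru, poly_erase hrv]
          ring
        rw [hsplit, e2, poly_perm (List.perm_orderedInsert (· ≤ ·) r z'), poly_cons]
        ring
    · -- strict case
      push_neg at hcom
      have hvu : ∀ i < m, u.getD i 0 < v.getD i 0 := by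
        intro i him
        have hle := M1b hu hv 0 (show ∀ t, cnt v t ≤ cnt u t + 0 by intro t; have := h1 t; omega) i
          (show i + 0 < v.length by omega) (show i < u.length by omega)
        have hle' : u.getD i 0 ≤ v.getD i 0 := by simpa using hle
        rcases lt_or_eq_of_le hle' with h | h
        · exact h
        · exfalso
          refine hcom (u.getD i 0) (mem_of_getD (show i < u.length by omega)) ?_
          rw [h]
          exact mem_of_getD (show i < v.length by omega)
      have huv : ∀ i, i + 1 < N → v.getD i 0 < u.getD (i + 1) 0 := by
        intro i hiN
        have hle := M1b hv hu 1 h2 i (show i + 1 < u.length by omega) (show i < v.length by omega)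
        rcases lt_or_eq_of_le hle with h | h
        · exact h
        · exfalso
          refine hcom (u.getD (i+1) 0) (mem_of_getD (show i + 1 < u.length by omega)) ?_
          rw [← h]
          exact mem_of_getD (show i < v.length by omega)
      obtain ⟨w, hws, hwl, hwb1, hwb2, _, _, ew⟩ :=
        SUB_lt N m u v hu hv hul hvl hNm hvu huv A B a b hA hB ha hb
      obtain ⟨z, hzs, hzl, hzb1, hzb2, _, _, ez⟩ :=
        SUB_lt N m u v hu hv hul hvl hNm hvu huv A B c d hA hB hc hd
      -- determinant comparison : z ≤ w pointwise
      have hzw : ∀ i < N, z.getD i 0 ≤ w.getD i 0 := by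
        intro i hiN
        by_contra hcon
        push_neg at hcon
        set x := w.getD i 0 with hx
        have hpx : (comb (a*B) (b*A) v u).eval x = 0 := by
          rw [ew]
          rw [eval_mul, hx, poly_eval_mem (mem_of_getD (show i < w.length by omega)), mul_zero]
        rw [comb_eval] at hpx
        -- x not in v, count = i
        have hlowv : ∀ j < m, j < i → v.getD j 0 < x := by
          intro j hjm hji
          calc v.getD j 0 ≤ v.getD (i-1) 0 := sorted_getD_le hv (by omega) (by omega)
          _ < w.getD (i-1+1) 0 := hwb2 (i-1) (by omega)
          _ = x := by rw [hx]; congr 1; omega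
        have hxv : x ∉ v := by
          apply not_mem_of_strict hv (i := i)
          · intro j hjlen hji
            exact hlowv j (by omega) hji
          · intro j hjlen hij
            calc x ≤ u.getD i 0 := hwb1 i hiN
            _ < v.getD i 0 := hvu i (by omega)
            _ ≤ v.getD j 0 := sorted_getD_le hv hij hjlen
        have hcntvx : cnt v x = i := by
          have hge : i ≤ cnt v x := by
            rcases Nat.eq_zero_or_pos i with rfl | hipos
            · exact Nat.zero_le _
            · rcases Nat.lt_or_ge (i-1) m with h' | h'
              · have := (S_iff v hv (i-1) x (by omega)).mp (hlowv (i-1) h' (by omega))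
                omega
              · have := cnt_le_length v x
                omega
          have hle : cnt v x ≤ i := by
            by_cases him : i < m
            · by_contra hcc
              push_neg at hcc
              have := (S_iff v hv i x (by omega)).mpr hcc
              have h3 := hwb1 i hiN
              have h4 := hvu i him
              linarith
            · have := cnt_le_length v x; omega
          omega
        have hsgnv := sgn_eval' hxv
        rw [hvl, hcntvx] at hsgnv
        -- x not in z, count = i
        have hlowz : ∀ j, j < i → z.getD j 0 < x := by
          intro j hji
          calc z.getD j 0 ≤ z.getD (i-1) 0 := sorted_getD_le hzs (by omega) (by omega)
          _ ≤ u.getD (i-1) 0 := hzb1 (i-1) (by omega)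
          _ < v.getD (i-1) 0 := hvu (i-1) (by omega)
          _ < w.getD (i-1+1) 0 := hwb2 (i-1) (by omega)
          _ = x := by rw [hx]; congr 1; omega
        have hxz : x ∉ z := by
          apply not_mem_of_strict hzs (i := i)
          · intro j hjlen hji
            exact hlowz j hji
          · intro j hjlen hij
            calc x < z.getD i 0 := hcon
            _ ≤ z.getD j 0 := sorted_getD_le hzs hij hjlen
        have hcntzx : cnt z x = i := by
          have hge : i ≤ cnt z x := by
            rcases Nat.eq_zero_or_pos i with rfl | hipos
            · exact Nat.zero_le _
            · have := (S_iff z hzs (i-1) x (by omega)).mp (hlowz (i-1) (by omega))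
              omega
          have hle : cnt z x ≤ i := by
            by_contra hcc
            push_neg at hcc
            have := (S_iff z hzs i x (by omega)).mpr hcc
            linarith
          omega
        have hqx : (comb (c*B) (d*A) v u).eval x * b = B * (b*c - a*d) * (poly v).eval x := by
          rw [comb_eval]
          have : (b*A) * (poly u).eval x = -((a*B) * (poly v).eval x) := by linarith
          have hu_eval : (poly u).eval x = -((a*B) * (poly v).eval x) / (b*A) := by
            field_simp at this ⊢
            linarith
          rw [hu_eval]
          field_simp
          ring
        have hqz : (comb (c*B) (d*A) v u).eval x = (d*A) * (poly z).eval x := by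
          rw [ez]; simp
        have hsgnz := sgn_eval' hxz
        rw [hzl, hcntzx] at hsgnz
        -- signs
        have hflip : (-1 : ℝ) ^ (N - i) = -(-1 : ℝ) ^ (m - i) := by
          obtain ⟨k, hk⟩ : ∃ k, N - i = k + 1 := ⟨N - i - 1, by omega⟩
          have hk2 : m - i = k := by omega
          rw [hk2, hk, pow_succ]; ring
        have hpos1 : 0 ≤ (-1 : ℝ) ^ (m - i) * ((comb (c*B) (d*A) v u).eval x * b) := by
          rw [hqx]
          have hfac : 0 ≤ B * (b*c - a*d) := by nlinarith
          calc (0:ℝ) ≤ (B * (b*c - a*d)) * ((-1 : ℝ) ^ (m - i) * (poly v).eval x) :=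
                mul_nonneg hfac (le_of_lt hsgnv)
          _ = (-1 : ℝ) ^ (m - i) * (B * (b*c - a*d) * (poly v).eval x) := by ring
        have hneg1 : (-1 : ℝ) ^ (m - i) * ((comb (c*B) (d*A) v u).eval x * b) < 0 := by
          have h0 : (-1 : ℝ) ^ (N - i) * (poly z).eval x > 0 := hsgnz
          rw [hflip] at h0
          have h0' : (-1:ℝ) ^ (m - i) * (poly z).eval x < 0 := by nlinarith [h0]
          have hlcz : 0 < d*A := by positivity
          rw [hqz]
          have hre : (-1:ℝ)^(m-i) * ((d*A) * (poly z).eval x * b)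
              = ((-1:ℝ)^(m-i) * (poly z).eval x) * ((d*A)*b) := by ring
          rw [hre]
          exact mul_neg_of_neg_of_pos h0' (mul_pos hlcz hb)
        linarith
      refine ⟨w, z, hws, hzs, hwl, hzl, ?_, ?_, ?_, ?_, ?_, ew, ez⟩
      · intro t
        have := M1a hws hu 0 (show u.length ≤ w.length + 0 by omega)
          (fun i hi => by simpa using hwb1 i (by simp at hi; omega)) t
        omega
      · intro t
        have := M1a hv hws 1 (show w.length ≤ v.length + 1 by omega)
          (fun i hi => le_of_lt (hwb2 i (by omega))) t
        omega
      · intro t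
        have := M1a hzs hu 0 (show u.length ≤ z.length + 0 by omega)
          (fun i hi => by simpa using hzb1 i (by simp at hi; omega)) t
        omega
      · intro t
        have := M1a hv hzs 1 (show z.length ≤ v.length + 1 by omega)
          (fun i hi => le_of_lt (hzb2 i (by omega))) t
        omega
      · intro t
        have := M1a hzs hws 0 (show w.length ≤ z.length + 0 by omega)
          (fun i hi => by simpa using hzw i (by simp at hi; omega)) t
        omega


lemma lc_pos {p : Polynomial ℝ} (hp : p ≠ 0) (hnn : NonnegCoeffs p) : 0 < p.leadingCoeff :=
  lt_of_le_of_ne (hnn p.natDegree) (Ne.symm (Polynomial.leadingCoeff_ne_zero.mpr hp))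

lemma mem_rootList_nonpos {p : Polynomial ℝ} (hp : p ≠ 0) (hnn : NonnegCoeffs p) :
    ∀ x ∈ rootList p, x ≤ 0 := by
  intro x hx
  apply roots_nonpos hp hnn
  rw [← rootList_coe p]
  exact Multiset.mem_coe.mpr hx

lemma sorted_append_zero {L : List ℝ} (hs : L.Pairwise (· ≤ ·)) (h0 : ∀ x ∈ L, x ≤ 0) :
    (L ++ [0]).Pairwise (· ≤ ·) := by
  rw [List.pairwise_append]
  refine ⟨hs, by simp, ?_⟩
  intro x hx y hy
  simp only [List.mem_singleton] at hy
  subst hy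
  exact h0 x hx

lemma cnt_append_zero (L : List ℝ) (t : ℝ) :
    cnt (L ++ [0]) t = cnt L t + (if (0:ℝ) < t then 1 else 0) := by
  rw [cnt_append, cnt_cons]
  have : cnt ([] : List ℝ) t = 0 := by
    have := cnt_le_length ([] : List ℝ) t
    simpa using this
  omega

lemma entries_nonpos_trans {u w : List ℝ} (hus : u.Pairwise (· ≤ ·)) (hws : w.Pairwise (· ≤ ·))
    (hlen : w.length ≤ u.length) (hc : ∀ t, cnt u t ≤ cnt w t)
    (hu0 : ∀ x ∈ u, x ≤ 0) : ∀ x ∈ w, x ≤ 0 := by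
  apply forall_mem_of_getD
  intro i hi
  have := M1b hws hus 0 (fun t => by have := hc t; omega) i (by omega) (by omega)
  calc w.getD i 0 ≤ u.getD (i+0) 0 := this
  _ ≤ 0 := hu0 _ (by
    rw [List.getD_eq_getElem u 0 (by omega)]
    exact List.getElem_mem _)

/-- finish: second disjunct of Interlaces -/
lemma FIN2 {lcp lcq : ℝ} (hlcp : 0 < lcp) (hlcq : 0 < lcq) (w zz : List ℝ)
    (hws : w.Pairwise (· ≤ ·)) (hzs : zz.Pairwise (· ≤ ·)) (hlen : zz.length = w.length + 1)
    (hc1 : ∀ t, cnt w t ≤ cnt zz t) (hc2 : ∀ t, cnt zz t ≤ cnt w t + 1) :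
    Interlaces (C lcp * poly w) (C lcq * poly zz) := by
  refine Or.inr (Or.inr ⟨CpolyL_realRooted _ (ne_of_gt hlcq) _,
    CpolyL_realRooted _ (ne_of_gt hlcp) _, ?_, ?_, Or.inr ⟨?_, ?_, ?_⟩⟩)
  · rw [CpolyL_leadingCoeff]; exact hlcq
  · rw [CpolyL_leadingCoeff]; exact hlcp
  · rw [CpolyL_natDegree _ (ne_of_gt hlcq), CpolyL_natDegree _ (ne_of_gt hlcp), hlen]
  · intro i hi
    rw [CpolyL_natDegree _ (ne_of_gt hlcp)] at hi
    rw [CpolyL_rootList _ (ne_of_gt hlcp) hws, CpolyL_rootList _ (ne_of_gt hlcq) hzs]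
    have := M1b hzs hws 0 (fun t => by have := hc1 t; omega) i (by omega) (by omega)
    simpa using this
  · intro i hi
    rw [CpolyL_natDegree _ (ne_of_gt hlcq)] at hi
    rw [CpolyL_rootList _ (ne_of_gt hlcp) hws, CpolyL_rootList _ (ne_of_gt hlcq) hzs]
    exact M1b hws hzs 1 hc2 i (by omega) (by omega)

/-- finish: first disjunct of Interlaces -/
lemma FIN1 {lcp lcq : ℝ} (hlcp : 0 < lcp) (hlcq : 0 < lcq) (w zz : List ℝ)
    (hws : w.Pairwise (· ≤ ·)) (hzs : zz.Pairwise (· ≤ ·)) (hlen : zz.length = w.length)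
    (hc1 : ∀ t, cnt zz t ≤ cnt w t) (hc2 : ∀ t, cnt w t ≤ cnt zz t + 1) :
    Interlaces (C lcp * poly w) (C lcq * poly zz) := by
  refine Or.inr (Or.inr ⟨CpolyL_realRooted _ (ne_of_gt hlcq) _,
    CpolyL_realRooted _ (ne_of_gt hlcp) _, ?_, ?_, Or.inl ⟨?_, ?_, ?_⟩⟩)
  · rw [CpolyL_leadingCoeff]; exact hlcq
  · rw [CpolyL_leadingCoeff]; exact hlcp
  · rw [CpolyL_natDegree _ (ne_of_gt hlcq), CpolyL_natDegree _ (ne_of_gt hlcp), hlen]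
  · intro i hi
    rw [CpolyL_natDegree _ (ne_of_gt hlcq)] at hi
    rw [CpolyL_rootList _ (ne_of_gt hlcp) hws, CpolyL_rootList _ (ne_of_gt hlcq) hzs]
    have := M1b hws hzs 0 (fun t => by have := hc1 t; omega) i (by omega) (by omega)
    simpa using this
  · intro i hi
    rw [CpolyL_natDegree _ (ne_of_gt hlcq)] at hi
    rw [CpolyL_rootList _ (ne_of_gt hlcp) hws, CpolyL_rootList _ (ne_of_gt hlcq) hzs]
    exact M1b hzs hws 1 hc2 i (by omega) (by omega)

/-- if `a, b, c, d ≥ 0` with `ad ≤ bc` and `g ≼ f` for real-rooted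
polynomials `f, g` with nonnegative coefficients, then
`a·g + b·f ≼ x·(c·g + d·f)` provided both are nonzero. -/
theorem stmt5 (a b c d : ℝ) (ha : 0 ≤ a) (hb : 0 ≤ b) (hc : 0 ≤ c) (hd : 0 ≤ d)
    (hdet : a * d ≤ b * c) (f g : Polynomial ℝ)
    (hfrr : RealRooted f) (hgrr : RealRooted g)
    (hfnn : NonnegCoeffs f) (hgnn : NonnegCoeffs g)
    (hint : Interlaces g f)
    (h1 : a • g + b • f ≠ 0) (h2 : X * (c • g + d • f) ≠ 0) :
    Interlaces (a • g + b • f) (X * (c • g + d • f)) := by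
  have hq0ne : c • g + d • f ≠ 0 := fun h => h2 (by rw [h, mul_zero])
  rcases hint with hg0 | hf0 | ⟨hfr', hgr', hflc, hglc, hcase⟩
  · -- g = 0 case
    subst hg0
    simp only [smul_zero, zero_add] at h1 hq0ne ⊢
    have hbne : b ≠ 0 := fun hh => h1 (by rw [hh, zero_smul])
    have hfne : f ≠ 0 := fun hh => h1 (by rw [hh, smul_zero])
    have hdne : d ≠ 0 := fun hh => hq0ne (by rw [hh, zero_smul])
    have hb' : 0 < b := lt_of_le_of_ne hb (Ne.symm hbne)
    have hd' : 0 < d := lt_of_le_of_ne hd (Ne.symm hdne)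
    have hA := lc_pos hfne hfnn
    have hfd := decomp hfne hfrr
    have hus := rootList_sorted f
    have hu0 := mem_rootList_nonpos hfne hfnn
    have hpeq : b • f = C (b * f.leadingCoeff) * poly (rootList f) := by
      rw [Polynomial.smul_eq_C_mul]
      conv_lhs => rw [hfd]
      rw [← mul_assoc, ← Polynomial.C_mul]
    have hqeq : X * (d • f) = C (d * f.leadingCoeff) * poly (rootList f ++ [0]) := by
      rw [Polynomial.smul_eq_C_mul]
      conv_lhs => rw [hfd]
      rw [poly_append_zero, Polynomial.C_mul]
      ring
    rw [hpeq, hqeq]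
    refine FIN2 (by positivity) (by positivity) _ _ hus (sorted_append_zero hus hu0)
      (by simp) ?_ ?_
    · intro t; rw [cnt_append_zero]; split_ifs <;> omega
    · intro t; rw [cnt_append_zero]; split_ifs <;> omega
  · -- f = 0 case
    subst hf0
    simp only [smul_zero, add_zero] at h1 hq0ne ⊢
    have hane : a ≠ 0 := fun hh => h1 (by rw [hh, zero_smul])
    have hgne : g ≠ 0 := fun hh => h1 (by rw [hh, smul_zero])
    have hcne : c ≠ 0 := fun hh => hq0ne (by rw [hh, zero_smul])
    have ha' : 0 < a := lt_of_le_of_ne ha (Ne.symm hane)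
    have hc' : 0 < c := lt_of_le_of_ne hc (Ne.symm hcne)
    have hB := lc_pos hgne hgnn
    have hgd := decomp hgne hgrr
    have hvs := rootList_sorted g
    have hv0 := mem_rootList_nonpos hgne hgnn
    have hpeq : a • g = C (a * g.leadingCoeff) * poly (rootList g) := by
      rw [Polynomial.smul_eq_C_mul]
      conv_lhs => rw [hgd]
      rw [← mul_assoc, ← Polynomial.C_mul]
    have hqeq : X * (c • g) = C (c * g.leadingCoeff) * poly (rootList g ++ [0]) := by
      rw [Polynomial.smul_eq_C_mul]
      conv_lhs => rw [hgd]
      rw [poly_append_zero, Polynomial.C_mul]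
      ring
    rw [hpeq, hqeq]
    refine FIN2 (by positivity) (by positivity) _ _ hvs (sorted_append_zero hvs hv0)
      (by simp) ?_ ?_
    · intro t; rw [cnt_append_zero]; split_ifs <;> omega
    · intro t; rw [cnt_append_zero]; split_ifs <;> omega
  · -- main case
    have hfne : f ≠ 0 := Polynomial.leadingCoeff_ne_zero.mp (ne_of_gt hflc)
    have hgne : g ≠ 0 := Polynomial.leadingCoeff_ne_zero.mp (ne_of_gt hglc)
    set A := f.leadingCoeff with hAdef
    set B := g.leadingCoeff with hBdef
    set u := rootList f with hudef
    set v := rootList g with hvdef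
    have hus : u.Pairwise (· ≤ ·) := rootList_sorted f
    have hvs : v.Pairwise (· ≤ ·) := rootList_sorted g
    have hul : u.length = f.natDegree := rootList_length hfrr
    have hvl : v.length = g.natDegree := rootList_length hgrr
    have hu0 : ∀ x ∈ u, x ≤ 0 := mem_rootList_nonpos hfne hfnn
    have hv0 : ∀ x ∈ v, x ≤ 0 := mem_rootList_nonpos hgne hgnn
    have hfd : f = C A * poly u := decomp hfne hfrr
    have hgd : g = C B * poly v := decomp hgne hgrr
    have hpeq : a • g + b • f = comb (a*B) (b*A) v u := by
      rw [Polynomial.smul_eq_C_mul, Polynomial.smul_eq_C_mul, hfd, hgd]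
      unfold comb
      rw [Polynomial.C_mul, Polynomial.C_mul]
      ring
    have hqeq : c • g + d • f = comb (c*B) (d*A) v u := by
      rw [Polynomial.smul_eq_C_mul, Polynomial.smul_eq_C_mul, hfd, hgd]
      unfold comb
      rw [Polynomial.C_mul, Polynomial.C_mul]
      ring
    rcases hcase with ⟨hdeg, hc1, hc2⟩ | ⟨hdeg, hc1, hc2⟩
    · -- equal degree case
      set N := f.natDegree with hNdef
      have hulN : u.length = N := hul
      have hvlN : v.length = N := by rw [hvl, ← hdeg]
      have hcnt1 : ∀ t, cnt u t ≤ cnt v t := by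
        intro t
        have := M1a hvs hus 0 (by omega)
          (fun i hi => by simpa using hc1 i (by simp at hi; omega)) t
        omega
      have hcnt2 : ∀ t, cnt v t ≤ cnt u t + 1 :=
        M1a hus hvs 1 (by omega) (fun i hi => hc2 i (by omega))
      by_cases hbz : b = 0
      · -- b = 0 : then a > 0, d = 0, c > 0
        subst hbz
        have hane : a ≠ 0 := by
          intro hh
          exact h1 (by rw [hh, zero_smul, zero_smul, add_zero])
        have ha' : 0 < a := lt_of_le_of_ne ha (Ne.symm hane)
        have hdz : d = 0 := by
          by_contra hdd
          have hd' : 0 < d := lt_of_le_of_ne hd (Ne.symm hdd)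
          nlinarith
        subst hdz
        have hcne : c ≠ 0 := by
          intro hh
          exact hq0ne (by rw [hh, zero_smul, zero_smul, add_zero])
        have hc' : 0 < c := lt_of_le_of_ne hc (Ne.symm hcne)
        have hB := hglc
        have hpeq' : a • g + (0:ℝ) • f = C (a*B) * poly v := by
          rw [zero_smul, add_zero, Polynomial.smul_eq_C_mul, hgd, ← mul_assoc,
            ← Polynomial.C_mul]
        have hqeq' : X * (c • g + (0:ℝ) • f) = C (c*B) * poly (v ++ [0]) := by
          rw [zero_smul, add_zero, Polynomial.smul_eq_C_mul, hgd, poly_append_zero,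
            Polynomial.C_mul]
          ring
        rw [hpeq', hqeq']
        refine FIN2 (by positivity) (by positivity) _ _ hvs (sorted_append_zero hvs hv0)
          (by simp) ?_ ?_
        · intro t; rw [cnt_append_zero]; split_ifs <;> omega
        · intro t; rw [cnt_append_zero]; split_ifs <;> omega
      · have hb' : 0 < b := lt_of_le_of_ne hb (Ne.symm hbz)
        by_cases hdz : d = 0
        · -- d = 0, b > 0 : c > 0
          subst hdz
          have hcne : c ≠ 0 := by
            intro hh
            exact hq0ne (by rw [hh, zero_smul, zero_smul, add_zero])
          have hc' : 0 < c := lt_of_le_of_ne hc (Ne.symm hcne)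
          obtain ⟨w, z', hws, _, hwl, _, cw1, cw2, _, _, _, e1, _⟩ :=
            GRAND_eq N u v hulN hus hvs hvlN hcnt1 hcnt2 A B a b a b hflc hglc ha hb' ha hb'
              (le_of_eq (mul_comm a b))
          have hw0 : ∀ x ∈ w, x ≤ 0 := entries_nonpos_trans hus hws (by omega) cw1 hu0
          have hqeq' : X * (c • g + (0:ℝ) • f) = C (c*B) * poly (v ++ [0]) := by
            rw [zero_smul, add_zero, Polynomial.smul_eq_C_mul, hgd, poly_append_zero,
              Polynomial.C_mul]
            ring
          have hpeq2 : a • g + b • f = C (a*B + b*A) * poly w := by rw [hpeq, e1]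
          rw [hpeq2, hqeq']
          refine FIN2 (by positivity) (by positivity) _ _ hws
            (sorted_append_zero hvs hv0) (by simp; omega) ?_ ?_
          · intro t; rw [cnt_append_zero]
            have := cw2 t; split_ifs <;> omega
          · intro t; rw [cnt_append_zero]
            have h3 := hcnt2 t
            have h4 := cw1 t
            split_ifs with ht
            · have hwt : cnt w t = N := by
                rw [← hwl]
                exact cnt_eq_length (fun y hy => lt_of_le_of_lt (hw0 y hy) ht)
              have hvt : cnt v t = N := by
                rw [← hvlN]
                exact cnt_eq_length (fun y hy => lt_of_le_of_lt (hv0 y hy) ht)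
              omega
            · omega
        · -- b > 0, d > 0 : the generic case
          have hd' : 0 < d := lt_of_le_of_ne hd (Ne.symm hdz)
          obtain ⟨w, z, hws, hzs, hwl, hzl, cw1, cw2, cz1, cz2, czw, e1, e2⟩ :=
            GRAND_eq N u v hulN hus hvs hvlN hcnt1 hcnt2 A B a b c d hflc hglc ha hb' hc hd' hdet
          have hw0 : ∀ x ∈ w, x ≤ 0 := entries_nonpos_trans hus hws (by omega) cw1 hu0
          have hz0 : ∀ x ∈ z, x ≤ 0 := entries_nonpos_trans hus hzs (by omega) cz1 hu0
          have hpeq2 : a • g + b • f = C (a*B + b*A) * poly w := by rw [hpeq, e1]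
          have hqeq2 : X * (c • g + d • f) = C (c*B + d*A) * poly (z ++ [0]) := by
            rw [hqeq, e2, poly_append_zero]
            ring
          rw [hpeq2, hqeq2]
          refine FIN2 (by positivity) (by positivity) _ _ hws
            (sorted_append_zero hzs hz0) (by simp; omega) ?_ ?_
          · intro t; rw [cnt_append_zero]
            have := czw t; split_ifs <;> omega
          · intro t; rw [cnt_append_zero]
            have h3 := hcnt2 t
            have h4 := cw1 t
            have h5 := cz2 t
            split_ifs with ht
            · have hwt : cnt w t = N := by
                rw [← hwl]
                exact cnt_eq_length (fun y hy => lt_of_le_of_lt (hw0 y hy) ht)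
              have hzt : cnt z t = N := by
                rw [← hzl]
                exact cnt_eq_length (fun y hy => lt_of_le_of_lt (hz0 y hy) ht)
              omega
            · omega
    · -- off-by-one case
      set N := f.natDegree with hNdef
      set m := g.natDegree with hmdef
      have hulN : u.length = N := hul
      have hvlm : v.length = m := hvl
      have hNm : N = m + 1 := hdeg
      have hcnt1 : ∀ t, cnt v t ≤ cnt u t := by
        intro t
        have := M1a hus hvs 0 (by omega)
          (fun i hi => by simpa using hc1 i (by simp at hi; omega)) t
        omega
      have hcnt2 : ∀ t, cnt u t ≤ cnt v t + 1 :=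
        M1a hvs hus 1 (by omega) (fun i hi => hc2 i (by omega))
      by_cases hbz : b = 0
      · subst hbz
        have hane : a ≠ 0 := by
          intro hh
          exact h1 (by rw [hh, zero_smul, zero_smul, add_zero])
        have ha' : 0 < a := lt_of_le_of_ne ha (Ne.symm hane)
        have hdz : d = 0 := by
          by_contra hdd
          have hd' : 0 < d := lt_of_le_of_ne hd (Ne.symm hdd)
          nlinarith
        subst hdz
        have hcne : c ≠ 0 := by
          intro hh
          exact hq0ne (by rw [hh, zero_smul, zero_smul, add_zero])
        have hc' : 0 < c := lt_of_le_of_ne hc (Ne.symm hcne)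
        have hpeq' : a • g + (0:ℝ) • f = C (a*B) * poly v := by
          rw [zero_smul, add_zero, Polynomial.smul_eq_C_mul, hgd, ← mul_assoc,
            ← Polynomial.C_mul]
        have hqeq' : X * (c • g + (0:ℝ) • f) = C (c*B) * poly (v ++ [0]) := by
          rw [zero_smul, add_zero, Polynomial.smul_eq_C_mul, hgd, poly_append_zero,
            Polynomial.C_mul]
          ring
        rw [hpeq', hqeq']
        refine FIN2 (by positivity) (by positivity) _ _ hvs (sorted_append_zero hvs hv0)
          (by simp) ?_ ?_
        · intro t; rw [cnt_append_zero]; split_ifs <;> omega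
        · intro t; rw [cnt_append_zero]; split_ifs <;> omega
      · have hb' : 0 < b := lt_of_le_of_ne hb (Ne.symm hbz)
        by_cases hdz : d = 0
        · -- d = 0, b > 0 : c > 0, first disjunct
          subst hdz
          have hcne : c ≠ 0 := by
            intro hh
            exact hq0ne (by rw [hh, zero_smul, zero_smul, add_zero])
          have hc' : 0 < c := lt_of_le_of_ne hc (Ne.symm hcne)
          obtain ⟨w, z', hws, _, hwl, _, cw1, cw2, _, _, _, e1, _⟩ :=
            GRAND_lt N m u v hulN hNm hus hvs hvlm hcnt1 hcnt2 A B a b a b hflc hglc ha hb'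
              ha hb' (le_of_eq (mul_comm a b))
          have hw0 : ∀ x ∈ w, x ≤ 0 := entries_nonpos_trans hus hws (by omega) cw1 hu0
          have hpeq2 : a • g + b • f = C (b*A) * poly w := by rw [hpeq, e1]
          have hqeq' : X * (c • g + (0:ℝ) • f) = C (c*B) * poly (v ++ [0]) := by
            rw [zero_smul, add_zero, Polynomial.smul_eq_C_mul, hgd, poly_append_zero,
              Polynomial.C_mul]
            ring
          rw [hpeq2, hqeq']
          refine FIN1 (by positivity) (by positivity) _ _ hws
            (sorted_append_zero hvs hv0) (by simp; omega) ?_ ?_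
          · intro t; rw [cnt_append_zero]
            have h3 := hcnt1 t
            have h4 := cw1 t
            split_ifs with ht
            · have hwt : cnt w t = N := by
                rw [← hwl]
                exact cnt_eq_length (fun y hy => lt_of_le_of_lt (hw0 y hy) ht)
              have hvt : cnt v t = m := by
                rw [← hvlm]
                exact cnt_eq_length (fun y hy => lt_of_le_of_lt (hv0 y hy) ht)
              omega
            · omega
          · intro t; rw [cnt_append_zero]
            have := cw2 t; split_ifs <;> omega
        · -- b > 0, d > 0
          have hd' : 0 < d := lt_of_le_of_ne hd (Ne.symm hdz)
          obtain ⟨w, z, hws, hzs, hwl, hzl, cw1, cw2, cz1, cz2, czw, e1, e2⟩ :=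
            GRAND_lt N m u v hulN hNm hus hvs hvlm hcnt1 hcnt2 A B a b c d hflc hglc ha hb'
              hc hd' hdet
          have hw0 : ∀ x ∈ w, x ≤ 0 := entries_nonpos_trans hus hws (by omega) cw1 hu0
          have hz0 : ∀ x ∈ z, x ≤ 0 := entries_nonpos_trans hus hzs (by omega) cz1 hu0
          have hpeq2 : a • g + b • f = C (b*A) * poly w := by rw [hpeq, e1]
          have hqeq2 : X * (c • g + d • f) = C (d*A) * poly (z ++ [0]) := by
            rw [hqeq, e2, poly_append_zero]
            ring
          rw [hpeq2, hqeq2]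
          refine FIN2 (by positivity) (by positivity) _ _ hws
            (sorted_append_zero hzs hz0) (by simp; omega) ?_ ?_
          · intro t; rw [cnt_append_zero]
            have := czw t; split_ifs <;> omega
          · intro t; rw [cnt_append_zero]
            have h3 := hcnt1 t
            have h4 := hcnt2 t
            have h5 := cw1 t
            have h6 := cz2 t
            split_ifs with ht
            · have hwt : cnt w t = N := by
                rw [← hwl]
                exact cnt_eq_length (fun y hy => lt_of_le_of_lt (hw0 y hy) ht)
              have hzt : cnt z t = N := by
                rw [← hzl]
                exact cnt_eq_length (fun y hy => lt_of_le_of_lt (hz0 y hy) ht)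
              omega
            · omega
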